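/- Let U and V be finite-dimensional real inner product spaces, Q₁₂ : V → U a linear map, and Q₂₂ : V → V a self-adjoint positive semidefinite linear operator. Let Q : U × V → U × V be the self-adjoint positive semidefinite operator given in block form by Q(u,v) = (Q₁₁ u + Q₁₂ v, Q₁₂* u + Q₂₂ v) for some self-adjoint positive semidefinite Q₁₁. Then for all ũ, u ∈ U and ṽ, v, v′ ∈ V, we have 2⟨ũ - u, Q₁₂(ṽ - v′)⟩ ≤ ‖(ũ,ṽ) - (u,v)‖²_Q + ‖v′ - v‖²_{Q₂₂} - ‖ṽ - v‖²_{Q₂₂}, where ‖x‖²_A denotes ⟨x, A x⟩. -/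

import Mathlib

/-- The Cauchy–Schwarz type inequality (12) for the off-diagonal block of a
self-adjoint positive semidefinite 2×2 block operator `Q` on `U × V`.
The inner product on `U × V` is the componentwise sum. -/
theorem block_offdiag_cauchy_schwarz
    {U V : Type*} [NormedAddCommGroup U] [InnerProductSpace ℝ U]
    [NormedAddCommGroup V] [InnerProductSpace ℝ V]
    [FiniteDimensional ℝ U] [FiniteDimensional ℝ V]
    (Q11 : U →ₗ[ℝ] U) (Q12 : V →ₗ[ℝ] U) (Q12s : U →ₗ[ℝ] V) (Q22 : V →ₗ[ℝ] V)
    (Q : U × V →ₗ[ℝ] U × V)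
    -- block structure of Q
    (hblock : ∀ u v, Q (u, v) = (Q11 u + Q12 v, Q12s u + Q22 v))
    -- Q12s is the adjoint of Q12
    (hadj : ∀ (u : U) (v : V), (inner ℝ (Q12 v) u : ℝ) = inner ℝ v (Q12s u))
    -- Q11 self-adjoint positive semidefinite
    (hQ11sa : ∀ u u' : U, (inner ℝ (Q11 u) u' : ℝ) = inner ℝ u (Q11 u'))
    (hQ11psd : ∀ u : U, 0 ≤ (inner ℝ u (Q11 u) : ℝ))
    -- Q22 self-adjoint positive semidefinite
    (hQ22sa : ∀ v v' : V, (inner ℝ (Q22 v) v' : ℝ) = inner ℝ v (Q22 v'))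
    (hQ22psd : ∀ v : V, 0 ≤ (inner ℝ v (Q22 v) : ℝ))
    -- Q self-adjoint positive semidefinite (w.r.t. the product inner product)
    (hQsa : ∀ w w' : U × V,
      (inner ℝ (Q w).1 w'.1 : ℝ) + (inner ℝ (Q w).2 w'.2 : ℝ)
        = (inner ℝ w.1 (Q w').1 : ℝ) + (inner ℝ w.2 (Q w').2 : ℝ))
    (hQpsd : ∀ w : U × V, 0 ≤ (inner ℝ w.1 (Q w).1 : ℝ) + (inner ℝ w.2 (Q w).2 : ℝ)) :
    ∀ (u1 u0 : U) (v1 v0 v2 : V),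
      2 * (inner ℝ (u1 - u0) (Q12 (v1 - v2)) : ℝ)
        ≤ ((inner ℝ (u1 - u0) (Q (u1 - u0, v1 - v0)).1 : ℝ)
            + (inner ℝ (v1 - v0) (Q (u1 - u0, v1 - v0)).2 : ℝ))
          + (inner ℝ (v2 - v0) (Q22 (v2 - v0)) : ℝ)
          - (inner ℝ (v1 - v0) (Q22 (v1 - v0)) : ℝ) := by
  intro u1 u0 v1 v0 v2
  set a := u1 - u0 with ha
  set b := v1 - v0 with hb
  set c := v2 - v0 with hc
  have hd : v1 - v2 = b - c := by rw [hb, hc]; abel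
  have h := hQpsd (a, c)
  rw [hblock] at h
  simp only [hd, hblock, map_sub, inner_add_right, inner_sub_right] at h ⊢
  have h1 : (inner ℝ b (Q12s a) : ℝ) = inner ℝ a (Q12 b) := by
    rw [← hadj, real_inner_comm]
  have h2 : (inner ℝ c (Q12s a) : ℝ) = inner ℝ a (Q12 c) := by
    rw [← hadj, real_inner_comm]
  linarith
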